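/- With the same definitions, f_n(y) → f(y) = (1 + αy/(α+1))^{-1/α} as n → ∞, for every y > 0. -/

import Mathlib

open Real Filter Topology

/-- Bernoulli-type lower bound: `(1-s)^(-α) ≥ 1 + αs`. -/
lemma stmt7auxF1 {α s : ℝ} (hα : 0 < α) (hs : 0 ≤ s) (hs1 : s < 1) :
    1 + α * s ≤ (1 - s) ^ (-α) := by
  have h1 : (0:ℝ) < 1 - s := by linarith
  rw [Real.rpow_def_of_pos h1]
  have hlog : Real.log (1 - s) ≤ -s := by
    have := Real.log_le_sub_one_of_pos h1; linarith
  calc 1 + α * s ≤ Real.exp (α * s) := by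
        have := Real.add_one_le_exp (α * s); linarith
    _ ≤ Real.exp (Real.log (1 - s) * -α) := by
        apply Real.exp_le_exp.2; nlinarith

/-- Quantitative upper bound: `(1-s)^(-α) ≤ 1 + L·s` with `L → α` as `c → 0`. -/
lemma stmt7auxF2 {α s c : ℝ} (hα : 0 < α) (hs : 0 ≤ s) (hsc : s ≤ c) (hc : c < 1)
    (hv : α * c / (1 - c) ≤ 1 / 2) :
    (1 - s) ^ (-α) ≤ 1 + (α / (1 - c) + 2 * α ^ 2 * c / (1 - c) ^ 2) * s := by
  have hc0 : 0 ≤ c := le_trans hs hsc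
  have hd : (0:ℝ) < 1 - c := by linarith
  have h1 : (0:ℝ) < 1 - s := by linarith
  set u : ℝ := α * s / (1 - c) with hu
  have hu0 : 0 ≤ u := by positivity
  have huv : u ≤ α * c / (1 - c) := by
    rw [hu]; gcongr
  have hu2 : u ≤ 1 / 2 := le_trans huv hv
  have hstep1 : (1 - s) ^ (-α) ≤ Real.exp u := by
    rw [Real.rpow_def_of_pos h1]
    apply Real.exp_le_exp.2
    have hlog : -Real.log (1 - s) ≤ s / (1 - s) := by
      have h2 := Real.log_le_sub_one_of_pos (show (0:ℝ) < (1-s)⁻¹ by positivity)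
      rw [Real.log_inv] at h2
      have h3 : (1 - s)⁻¹ - 1 = s / (1 - s) := by field_simp; ring
      linarith [h3 ▸ h2]
    have hmono : s / (1 - s) ≤ s / (1 - c) := by gcongr
    have hkey : -Real.log (1 - s) ≤ s / (1 - c) := hlog.trans hmono
    have : Real.log (1 - s) * -α = α * (-Real.log (1 - s)) := by ring
    rw [this, hu, mul_div_assoc]
    exact mul_le_mul_of_nonneg_left hkey hα.le
  have h1u : (0:ℝ) < 1 - u := by linarith
  have hstep2 : Real.exp u ≤ 1 + u + 2 * u ^ 2 := by
    have h := Real.add_one_le_exp (-u)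
    have hinv : Real.exp (-u) * Real.exp u = 1 := by
      rw [← Real.exp_add]; simp
    nlinarith [Real.exp_pos u, sq_nonneg u,
      mul_le_mul_of_nonneg_right h (Real.exp_pos u).le]
  have hstep3 : 1 + u + 2 * u ^ 2 ≤
      1 + (α / (1 - c) + 2 * α ^ 2 * c / (1 - c) ^ 2) * s := by
    have hdiff : (α / (1 - c) + 2 * α ^ 2 * c / (1 - c) ^ 2) * s - (u + 2 * u ^ 2)
        = 2 * α ^ 2 * (s * (c - s)) / (1 - c) ^ 2 := by
      rw [hu]; field_simp; ring
    have hnn : 0 ≤ 2 * α ^ 2 * (s * (c - s)) / (1 - c) ^ 2 := by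
      have : 0 ≤ s * (c - s) := mul_nonneg hs (by linarith)
      positivity
    linarith [hdiff ▸ hnn]
  linarith [hstep1.trans hstep2]

noncomputable def stmt7E (α c : ℝ) : ℕ → ℝ
  | 0 => 1
  | k+1 => stmt7E α c k - c * (stmt7E α c k) ^ (α+1)

/-- Invariant bounds for the Euler iteration. -/
lemma stmt7key (α c : ℝ) (hα : 0 < α) (hc0 : 0 < c) (hc1 : c ≤ 1/2)
    (hv : α * c / (1 - c) ≤ 1/2) :
    ∀ k : ℕ, 0 < stmt7E α c k ∧ stmt7E α c k ≤ 1 ∧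
      1 + (k:ℝ) * (α * c) ≤ (stmt7E α c k) ^ (-α) ∧
      (stmt7E α c k) ^ (-α) ≤
        1 + (k:ℝ) * (c * (α / (1 - c) + 2 * α ^ 2 * c / (1 - c) ^ 2)) := by
  set L : ℝ := α / (1 - c) + 2 * α ^ 2 * c / (1 - c) ^ 2 with hLdef
  have hd : (0:ℝ) < 1 - c := by linarith
  have hL0 : 0 ≤ L := by rw [hLdef]; positivity
  intro k
  induction k with
  | zero => simp [stmt7E, Real.one_rpow]
  | succ k ih =>
    obtain ⟨hx0, hx1, hlow, hhigh⟩ := ih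
    set x := stmt7E α c k with hxdef
    set s : ℝ := c * x ^ α with hsdef
    have hxa0 : 0 < x ^ α := Real.rpow_pos_of_pos hx0 α
    have hs0 : 0 < s := mul_pos hc0 hxa0
    have hsc : s ≤ c := by
      have h1 : x ^ α ≤ 1 := Real.rpow_le_one hx0.le hx1 hα.le
      nlinarith
    have h1s : (0:ℝ) < 1 - s := by linarith
    have hEeq : stmt7E α c (k+1) = x * (1 - s) := by
      show x - c * x ^ (α+1) = x * (1 - s)
      rw [Real.rpow_add_one hx0.ne' α, hsdef]; ring
    have hpos : 0 < stmt7E α c (k+1) := by rw [hEeq]; positivity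
    have hle1 : stmt7E α c (k+1) ≤ 1 := by rw [hEeq]; nlinarith
    have hw0 : 0 < x ^ (-α) := Real.rpow_pos_of_pos hx0 _
    have hxs : x ^ (-α) * s = c := by
      rw [hsdef]
      have : x ^ (-α) * (c * x ^ α) = c * (x ^ (-α + α)) := by
        rw [Real.rpow_add hx0]; ring
      rw [this]; simp
    have hmul : (stmt7E α c (k+1)) ^ (-α) = x ^ (-α) * (1 - s) ^ (-α) := by
      rw [hEeq, Real.mul_rpow hx0.le h1s.le]
    refine ⟨hpos, hle1, ?_, ?_⟩
    · rw [hmul]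
      have hb := stmt7auxF1 hα hs0.le (by linarith : s < 1)
      have h2 : x ^ (-α) * (1 + α * s) ≤ x ^ (-α) * (1 - s) ^ (-α) :=
        mul_le_mul_of_nonneg_left hb hw0.le
      have h3 : x ^ (-α) * (1 + α * s) = x ^ (-α) + α * (x ^ (-α) * s) := by ring
      rw [h3, hxs] at h2
      push_cast
      linarith
    · rw [hmul]
      have hb := stmt7auxF2 hα hs0.le hsc (by linarith : c < 1) hv
      rw [← hLdef] at hb
      have h2 : x ^ (-α) * (1 - s) ^ (-α) ≤ x ^ (-α) * (1 + L * s) :=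
        mul_le_mul_of_nonneg_left hb hw0.le
      have h3 : x ^ (-α) * (1 + L * s) = x ^ (-α) + L * (x ^ (-α) * s) := by ring
      rw [h3, hxs] at h2
      push_cast
      linarith

theorem stmt7 (α : ℝ) (hα : 0 < α) (f : ℝ → ℝ)
    (hf : ∀ y, f y = (1 + α * y / (α + 1)) ^ (-(1 / α)))
    (fn : ℕ → ℝ → ℝ)
    (hfn1 : ∀ y, fn 1 y = 1 - y / (α + 1))
    (hfn0 : ∀ n : ℕ, 1 ≤ n → fn n 0 = 1)
    (hfnrec : ∀ n : ℕ, 1 ≤ n → ∀ y : ℝ, 0 < y → y ≤ n →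
      fn (n + 1) ((1 + 1 / n) * y) = fn n y - (y / ((α + 1) * n)) * (fn n y) ^ (α + 1)) :
    ∀ y : ℝ, 0 < y →
      Filter.Tendsto (fun n : ℕ => fn n y) Filter.atTop (nhds (f y)) := by
  intro y hy
  have hα1 : (0:ℝ) < α + 1 := by linarith
  -- the glue lemma: fn n y equals the Euler iteration
  have hglue : ∀ n : ℕ, 1 ≤ n → y ≤ n →
      ∀ k : ℕ, 1 ≤ k → k ≤ n → fn k ((k:ℝ) * y / n) = stmt7E α (y/((α+1)*n)) k := by
    intro n hn hyn
    have hn0 : ((n:ℝ)) ≠ 0 := by positivity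
    intro k
    induction k with
    | zero => intro h; omega
    | succ k ih =>
      intro _ hkn
      rcases Nat.eq_zero_or_pos k with hk0 | hk1
      · subst hk0
        rw [show ((1:ℕ):ℝ) = (1:ℝ) by norm_num, hfn1]
        show _ = (1:ℝ) - (y/((α+1)*n)) * (1:ℝ) ^ (α+1)
        rw [Real.one_rpow]
        field_simp
      · have hkk : (1:ℕ) ≤ k := hk1
        have hkn' : k ≤ n := by omega
        have hk0' : ((k:ℝ)) ≠ 0 := by positivity
        have harg_pos : 0 < (k:ℝ) * y / n := by positivity
        have harg_le : (k:ℝ) * y / n ≤ k := by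
          rw [div_le_iff₀ (by positivity : (0:ℝ) < (n:ℝ))]
          have : (k:ℝ) * y ≤ (k:ℝ) * n := by
            apply mul_le_mul_of_nonneg_left (le_trans hyn le_rfl) (by positivity)
          linarith
        have hrec := hfnrec k hkk ((k:ℝ) * y / n) harg_pos harg_le
        have harg_eq : (1 + 1/(k:ℝ)) * ((k:ℝ) * y / n) = ((k:ℝ)+1) * y / n := by
          field_simp
        have hcoef : ((k:ℝ) * y / n) / ((α+1) * k) = y / ((α+1)*n) := by
          field_simp
        rw [harg_eq, hcoef, ih hkk hkn'] at hrec
        push_cast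
        rw [hrec]
        rfl
  -- definitions for limits
  set c : ℕ → ℝ := fun n => y / ((α+1) * n) with hcdef
  set L : ℕ → ℝ := fun n => α / (1 - c n) + 2 * α ^ 2 * c n / (1 - c n) ^ 2 with hLdef
  have hc_to : Tendsto c atTop (𝓝 0) := by
    have h1 : Tendsto (fun n : ℕ => 1/(n:ℝ)) atTop (𝓝 0) := tendsto_one_div_atTop_nhds_zero_nat
    have h2 : Tendsto (fun n : ℕ => (y/(α+1)) * (1/(n:ℝ))) atTop (𝓝 ((y/(α+1)) * 0)) :=
      h1.const_mul _
    simp only [mul_zero] at h2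
    convert h2 using 2 with n
    simp only [hcdef]
    rw [mul_one_div, div_div]
  have h1c_to : Tendsto (fun n => 1 - c n) atTop (𝓝 1) := by
    have := hc_to.const_sub 1
    simpa using this
  have hL_to : Tendsto L atTop (𝓝 α) := by
    have hT1 : Tendsto (fun n => α / (1 - c n)) atTop (𝓝 (α / 1)) :=
      tendsto_const_nhds.div h1c_to one_ne_zero
    have hT2 : Tendsto (fun n => 2 * α ^ 2 * c n / (1 - c n) ^ 2) atTop
        (𝓝 (2 * α ^ 2 * 0 / 1 ^ 2)) := by
      exact (tendsto_const_nhds.mul hc_to).div (h1c_to.pow 2) (by norm_num)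
    have := hT1.add hT2
    simpa using this
  -- the limit point
  have hA : (0:ℝ) < 1 + α * y / (α + 1) := by positivity
  -- lower bound sequence
  set g : ℕ → ℝ := fun n => (1 + (y/(α+1)) * L n) ^ (-(1/α)) with hgdef
  have hg_to : Tendsto g atTop (𝓝 (f y)) := by
    have hinner : Tendsto (fun n => 1 + (y/(α+1)) * L n) atTop (𝓝 (1 + (y/(α+1)) * α)) :=
      tendsto_const_nhds.add (tendsto_const_nhds.mul hL_to)
    have := hinner.rpow_const (p := -(1/α)) (Or.inl (ne_of_gt (by positivity : (0:ℝ) < 1 + (y/(α+1)) * α)))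
    rw [hf y]
    convert this using 2
    ring
  -- eventual bounds
  have hev : ∀ᶠ n : ℕ in atTop, g n ≤ fn n y ∧ fn n y ≤ f y := by
    have hev1 : ∀ᶠ n : ℕ in atTop, (1:ℕ) ≤ n := eventually_ge_atTop 1
    have hev2 : ∀ᶠ n : ℕ in atTop, y ≤ (n:ℝ) :=
      tendsto_natCast_atTop_atTop.eventually_ge_atTop y
    have hev3 : ∀ᶠ n : ℕ in atTop, c n < 1/2 :=
      hc_to.eventually_lt_const (by norm_num)
    have hev4 : ∀ᶠ n : ℕ in atTop, α * c n / (1 - c n) < 1/2 := by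
      have : Tendsto (fun n => α * c n / (1 - c n)) atTop (𝓝 (α * 0 / 1)) :=
        (tendsto_const_nhds.mul hc_to).div h1c_to one_ne_zero
      simp only [mul_zero, zero_div] at this
      exact this.eventually_lt_const (by norm_num)
    filter_upwards [hev1, hev2, hev3, hev4] with n hn1 hn2 hn3 hn4
    have hn0 : ((n:ℝ)) ≠ 0 := by
      have : (0:ℝ) < n := by exact_mod_cast hn1
      exact ne_of_gt this
    have hnpos : (0:ℝ) < n := by exact_mod_cast hn1
    have hcn0 : 0 < c n := by rw [hcdef]; positivity
    have hkey := stmt7key α (c n) hα hcn0 hn3.le hn4.le n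
    obtain ⟨hE0, hE1, hwlow, hwhigh⟩ := hkey
    have hfneq : fn n y = stmt7E α (c n) n := by
      have := hglue n hn1 hn2 n hn1 le_rfl
      rw [show (n:ℝ) * y / n = y by field_simp] at this
      exact this
    set E := stmt7E α (c n) n with hEdef
    have hnc : (n:ℝ) * (α * c n) = α * y / (α + 1) := by
      rw [hcdef]; field_simp
    have hncL : (n:ℝ) * (c n * L n) = (y/(α+1)) * L n := by
      rw [hcdef]; field_simp
    rw [hnc] at hwlow
    have hwhigh2 : E ^ (-α) ≤ 1 + (y/(α+1)) * L n := by
      rw [← hncL]; exact hwhigh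
    -- convert bounds on E^(-α) to bounds on E
    have hErec : E = (E ^ (-α)) ^ (-(1/α)) := by
      rw [← Real.rpow_mul hE0.le]
      rw [show -α * -(1/α) = 1 by field_simp]
      rw [Real.rpow_one]
    have hB2 : (0:ℝ) < 1 + (y/(α+1)) * L n := lt_of_lt_of_le hA (by linarith)
    have hznp : -(1/α) ≤ 0 := neg_nonpos.mpr (by positivity)
    constructor
    · -- g n ≤ fn n y
      rw [hfneq]
      have h := Real.rpow_le_rpow_of_nonpos (Real.rpow_pos_of_pos hE0 (-α)) hwhigh2 hznp
      rw [← hErec] at h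
      exact h
    · -- fn n y ≤ f y
      rw [hfneq, hf y]
      have h := Real.rpow_le_rpow_of_nonpos hA hwlow hznp
      rw [← hErec] at h
      exact h
  exact tendsto_of_tendsto_of_tendsto_of_le_of_le' hg_to tendsto_const_nhds
    (hev.mono fun n h => h.1) (hev.mono fun n h => h.2)
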